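/- For all $x, y > 0$, $H(x,y) = -(2x-1)B(x,\tfrac12) + (2x+2y-1)B(x+y,\tfrac12)$, where $H(x,y) = \int_0^1 \frac{t^{x-1}(1-t^y)}{(1-t)^{3/2}}\,dt$ and $B$ is the Euler Beta function. -/

import Mathlib

open MeasureTheory

noncomputable def betaReal (x y : ℝ) : ℝ :=
  ∫ t in (0:ℝ)..1, t ^ (x - 1) * (1 - t) ^ (y - 1)

noncomputable def Hfun (x y : ℝ) : ℝ :=
  ∫ t in (0:ℝ)..1, t ^ (x - 1) * (1 - t ^ y) / (1 - t) ^ ((3:ℝ)/2)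

open Set Filter Topology

private lemma betaLeft (a b : ℝ) (ha : 0 < a) :
    IntervalIntegrable (fun t : ℝ => t ^ (a-1) * (1-t) ^ (b-1)) volume 0 (1/2) := by
  apply IntervalIntegrable.mul_continuousOn
  · exact intervalIntegral.intervalIntegrable_rpow' (by linarith)
  · apply ContinuousOn.rpow_const (by fun_prop)
    intro t ht
    rw [Set.uIcc_of_le (by norm_num : (0:ℝ) ≤ 1/2)] at ht
    have : (1:ℝ) - t ≠ 0 := by
      have := ht.2; intro h; rw [sub_eq_zero] at h; linarith
    exact Or.inl this

private lemma betaIntegrable (a b : ℝ) (ha : 0 < a) (hb : 0 < b) :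
    IntervalIntegrable (fun t : ℝ => t ^ (a-1) * (1-t) ^ (b-1)) volume 0 1 := by
  refine (betaLeft a b ha).trans ?_
  have h := ((betaLeft b a hb).comp_sub_left 1).symm
  simp only [sub_sub_cancel, sub_zero] at h
  have e : (fun t : ℝ => t ^ (a-1) * (1-t) ^ (b-1))
      = fun t : ℝ => (1-t) ^ (b-1) * t ^ (a-1) := by funext t; ring
  rw [e]
  have : (1:ℝ) - 1/2 = 1/2 := by norm_num
  rwa [this] at h

private lemma key_ineq {y t : ℝ} (hy : 0 < y) (ht0 : 0 < t) (ht1 : t ≤ 1) :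
    1 - t ^ y ≤ max 1 y * (1 - t) := by
  rcases le_total y 1 with h | h
  · have : t ^ (1:ℝ) ≤ t ^ y := Real.rpow_le_rpow_of_exponent_ge ht0 ht1 h
    rw [Real.rpow_one] at this
    nlinarith [le_max_left (1:ℝ) y]
  · have hb := one_add_mul_self_le_rpow_one_add (by linarith : (-1:ℝ) ≤ t - 1) h
    have e : (1:ℝ) + (t - 1) = t := by ring
    rw [e] at hb
    nlinarith [le_max_right (1:ℝ) y]

private lemma Hcont (x y : ℝ) :
    ContinuousOn (fun t : ℝ => t ^ (x - 1) * (1 - t ^ y) / (1 - t) ^ ((3:ℝ)/2)) (Ioo 0 1) := by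
  apply ContinuousOn.div
  · apply ContinuousOn.mul
    · exact continuousOn_id.rpow_const fun t ht => Or.inl ht.1.ne'
    · exact continuousOn_const.sub (continuousOn_id.rpow_const fun t ht => Or.inl ht.1.ne')
  · exact (continuousOn_const.sub continuousOn_id).rpow_const
      fun t ht => Or.inl (by simp only [Pi.sub_apply, id]; intro h; rw [sub_eq_zero] at h; exact ht.2.ne h.symm)
  · intro t ht
    exact (Real.rpow_pos_of_pos (by linarith [ht.2]) _).ne'

private lemma Hintegrable (x y : ℝ) (hx : 0 < x) (hy : 0 < y) :
    IntervalIntegrable (fun t : ℝ => t ^ (x - 1) * (1 - t ^ y) / (1 - t) ^ ((3:ℝ)/2))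
      volume 0 1 := by
  rw [intervalIntegrable_iff_integrableOn_Ioo_of_le zero_le_one]
  have hg : IntegrableOn (fun t : ℝ => max 1 y * (t ^ (x-1) * (1-t) ^ ((1:ℝ)/2-1))) (Ioo 0 1) := by
    rw [← intervalIntegrable_iff_integrableOn_Ioo_of_le zero_le_one]
    exact (betaIntegrable x (1/2) hx (by norm_num)).const_mul _
  refine hg.mono' ((Hcont x y).aestronglyMeasurable measurableSet_Ioo) ?_
  filter_upwards [ae_restrict_mem measurableSet_Ioo] with t ht
  have h1t : (0:ℝ) < 1 - t := by linarith [ht.2]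
  have hA : (0:ℝ) ≤ t ^ (x-1) := Real.rpow_nonneg ht.1.le _
  have hW : (0:ℝ) < (1-t) ^ ((3:ℝ)/2) := Real.rpow_pos_of_pos h1t _
  have hU : t ^ y ≤ 1 := Real.rpow_le_one ht.1.le ht.2.le hy.le
  have e : (1-t) ^ ((1:ℝ)/2-1) = (1-t) * ((1-t) ^ ((3:ℝ)/2))⁻¹ := by
    rw [show ((1:ℝ)/2-1) = 1 - (3:ℝ)/2 by norm_num, Real.rpow_sub h1t, Real.rpow_one,
      div_eq_mul_inv]
  have hnn : 0 ≤ t ^ (x - 1) * (1 - t ^ y) / (1 - t) ^ ((3:ℝ)/2) :=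
    div_nonneg (mul_nonneg hA (by linarith)) hW.le
  rw [Real.norm_of_nonneg hnn, e, div_eq_mul_inv]
  have hk := key_ineq hy ht.1 ht.2.le
  have hV : (0:ℝ) ≤ ((1-t) ^ ((3:ℝ)/2))⁻¹ := inv_nonneg.2 hW.le
  nlinarith [mul_nonneg hA hV, mul_le_mul_of_nonneg_right hk (mul_nonneg hA hV)]

private lemma Fderiv (x y : ℝ) (hx : 0 < x) (hy : 0 < y) {t : ℝ} (ht : t ∈ Ioo (0:ℝ) 1) :
    HasDerivAt (fun t : ℝ => 2 * (t ^ x * (1 - t ^ y)) * (1-t) ^ (-(1/2):ℝ))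
      (t ^ (x - 1) * (1 - t ^ y) / (1 - t) ^ ((3:ℝ)/2)
        + (2*x-1) * (t ^ (x-1) * (1-t) ^ ((1:ℝ)/2-1))
        - (2*x+2*y-1) * (t ^ (x+y-1) * (1-t) ^ ((1:ℝ)/2-1))) t := by
  obtain ⟨ht0, ht1⟩ := ht
  have h1t : (0:ℝ) < 1 - t := by linarith
  have h1 : HasDerivAt (fun t : ℝ => t ^ x) (x * t ^ (x-1)) t :=
    Real.hasDerivAt_rpow_const (Or.inl ht0.ne')
  have h2 : HasDerivAt (fun t : ℝ => t ^ y) (y * t ^ (y-1)) t :=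
    Real.hasDerivAt_rpow_const (Or.inl ht0.ne')
  have h3 : HasDerivAt (fun t : ℝ => 1 - t ^ y) (-(y * t ^ (y-1))) t := by
    simpa using h2.const_sub (1:ℝ)
  have h4 : HasDerivAt (fun t : ℝ => 1 - t) (-1 : ℝ) t := by
    simpa using (hasDerivAt_id t).const_sub (1:ℝ)
  have h5 : HasDerivAt (fun t : ℝ => (1-t) ^ (-(1/2):ℝ))
      ((-1) * (-(1/2):ℝ) * (1-t) ^ ((-(1/2):ℝ) - 1)) t :=
    h4.rpow_const (Or.inl h1t.ne')
  have hF := (((h1.mul h3).const_mul 2).mul h5)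
  refine hF.congr_deriv ?_
  have eA : t ^ x = t ^ (x-1) * t := by
    rw [← Real.rpow_add_one ht0.ne' (x-1), sub_add_cancel]
  have eB : t ^ (y-1) = t ^ y / t := by
    rw [Real.rpow_sub ht0, Real.rpow_one]
  have eC : t ^ (x+y-1) = t ^ (x-1) * t ^ y := by
    rw [← Real.rpow_add ht0]; ring_nf
  have eD : (1-t) ^ (-(1/2):ℝ) = (1-t) * ((1-t) ^ ((3:ℝ)/2))⁻¹ := by
    rw [show (-(1/2):ℝ) = 1 - (3:ℝ)/2 by norm_num, Real.rpow_sub h1t, Real.rpow_one,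
      div_eq_mul_inv]
  have eE : (1-t) ^ ((-(1/2):ℝ) - 1) = ((1-t) ^ ((3:ℝ)/2))⁻¹ := by
    rw [show ((-(1/2):ℝ) - 1) = -((3:ℝ)/2) by norm_num, Real.rpow_neg h1t.le]
  have eF : (1-t) ^ ((1:ℝ)/2-1) = (1-t) * ((1-t) ^ ((3:ℝ)/2))⁻¹ := by
    rw [show ((1:ℝ)/2-1) = 1 - (3:ℝ)/2 by norm_num, Real.rpow_sub h1t, Real.rpow_one,
      div_eq_mul_inv]
  simp only [Pi.mul_apply]
  rw [eA, eB, eC, eD, eE, eF, div_eq_mul_inv]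
  field_simp
  ring

private lemma Flim0 (x y : ℝ) (hx : 0 < x) (hy : 0 < y) :
    Tendsto (fun t : ℝ => 2 * (t ^ x * (1 - t ^ y)) * (1-t) ^ (-(1/2):ℝ)) (𝓝[>] 0) (𝓝 0) := by
  have hc : ContinuousAt (fun t : ℝ => 2 * (t ^ x * (1 - t ^ y)) * (1-t) ^ (-(1/2):ℝ)) 0 := by
    apply ContinuousAt.mul
    · exact continuousAt_const.mul ((Real.continuousAt_rpow_const 0 x (Or.inr hx.le)).mul
        (continuousAt_const.sub (Real.continuousAt_rpow_const 0 y (Or.inr hy.le))))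
    · exact (continuousAt_const.sub continuousAt_id).rpow_const (Or.inl (by norm_num))
  have h := hc.tendsto.mono_left (nhdsWithin_le_nhds (s := Set.Ioi (0:ℝ)))
  simpa [Real.zero_rpow hx.ne', Real.zero_rpow hy.ne', Real.one_rpow] using h

private lemma Flim1 (x y : ℝ) (hx : 0 < x) (hy : 0 < y) :
    Tendsto (fun t : ℝ => 2 * (t ^ x * (1 - t ^ y)) * (1-t) ^ (-(1/2):ℝ)) (𝓝[<] 1) (𝓝 0) := by
  have hslope : Tendsto (fun t : ℝ => (t ^ y - 1 ^ y) / (t - 1)) (𝓝[<] 1) (𝓝 y) := by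
    have hd : HasDerivAt (fun t : ℝ => t ^ y) (y * (1:ℝ) ^ (y-1)) 1 :=
      Real.hasDerivAt_rpow_const (Or.inl one_ne_zero)
    have h := hasDerivAt_iff_tendsto_slope.mp hd
    simp only [Real.one_rpow, mul_one] at h
    have h2 := h.mono_left (nhdsWithin_mono _ (fun t (ht : t ∈ Iio 1) => ht.ne))
    refine h2.congr fun t => ?_
    rw [slope_def_field]
  have hroot : Tendsto (fun t : ℝ => (1-t) ^ ((1:ℝ)/2)) (𝓝[<] 1) (𝓝 0) := by
    have hc : ContinuousAt (fun t : ℝ => (1-t) ^ ((1:ℝ)/2)) 1 := by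
      apply ContinuousAt.rpow_const (continuousAt_const.sub continuousAt_id)
      exact Or.inr (by norm_num)
    have h := hc.tendsto.mono_left (nhdsWithin_le_nhds (s := Set.Iio (1:ℝ)))
    simpa [Real.zero_rpow (by norm_num : ((1:ℝ)/2) ≠ 0)] using h
  have hpow : Tendsto (fun t : ℝ => t ^ x) (𝓝[<] 1) (𝓝 1) := by
    have hc := Real.continuousAt_rpow_const 1 x (Or.inl one_ne_zero)
    have h := hc.tendsto.mono_left (nhdsWithin_le_nhds (s := Set.Iio (1:ℝ)))
    simpa using h
  have hG : Tendsto (fun t : ℝ => 2 * t ^ x * ((t ^ y - 1 ^ y) / (t - 1)) * (1-t) ^ ((1:ℝ)/2))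
      (𝓝[<] 1) (𝓝 0) := by
    have h := (((tendsto_const_nhds (x := (2:ℝ))).mul hpow).mul hslope).mul hroot
    simpa using h
  refine hG.congr' ?_
  have hmem : Ioo (0:ℝ) 1 ∈ 𝓝[<] (1:ℝ) := Ioo_mem_nhdsLT_of_mem ⟨one_pos, le_refl 1⟩
  filter_upwards [hmem] with t ht
  obtain ⟨ht0, ht1⟩ := ht
  have h1t : (0:ℝ) < 1 - t := by linarith
  have hne : t - 1 ≠ 0 := by intro h; rw [sub_eq_zero] at h; exact ht1.ne h
  have e : (1-t) ^ (-(1/2):ℝ) = (1-t) ^ ((1:ℝ)/2) / (1-t) := by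
    rw [show (-(1/2):ℝ) = (1:ℝ)/2 - 1 by norm_num, Real.rpow_sub h1t, Real.rpow_one]
  rw [e, Real.one_rpow]
  field_simp
  ring

theorem H_eq_beta (x y : ℝ) (hx : 0 < x) (hy : 0 < y) :
    Hfun x y = -(2 * x - 1) * betaReal x (1/2) + (2 * x + 2 * y - 1) * betaReal (x + y) (1/2) := by
  have hβ1 : IntervalIntegrable (fun t : ℝ => t ^ (x-1) * (1-t) ^ ((1:ℝ)/2-1)) volume 0 1 :=
    betaIntegrable x (1/2) hx (by norm_num)
  have hβ2 : IntervalIntegrable (fun t : ℝ => t ^ (x+y-1) * (1-t) ^ ((1:ℝ)/2-1)) volume 0 1 :=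
    betaIntegrable (x+y) (1/2) (by linarith) (by norm_num)
  have hH := Hintegrable x y hx hy
  have hftc := intervalIntegral.integral_eq_sub_of_hasDerivAt_of_tendsto (a := 0) (b := 1)
      zero_lt_one
      (f := fun t : ℝ => 2 * (t ^ x * (1 - t ^ y)) * (1-t) ^ (-(1/2):ℝ))
      (f' := fun t : ℝ => t ^ (x - 1) * (1 - t ^ y) / (1 - t) ^ ((3:ℝ)/2)
        + (2*x-1) * (t ^ (x-1) * (1-t) ^ ((1:ℝ)/2-1))
        - (2*x+2*y-1) * (t ^ (x+y-1) * (1-t) ^ ((1:ℝ)/2-1)))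
      (fun t ht => Fderiv x y hx hy ht)
      ((hH.add (hβ1.const_mul _)).sub (hβ2.const_mul _))
      (Flim0 x y hx hy) (Flim1 x y hx hy)
  rw [intervalIntegral.integral_sub (hH.add (hβ1.const_mul _)) (hβ2.const_mul _),
      intervalIntegral.integral_add hH (hβ1.const_mul _),
      intervalIntegral.integral_const_mul, intervalIntegral.integral_const_mul] at hftc
  have e1 : Hfun x y = ∫ t in (0:ℝ)..1, t ^ (x - 1) * (1 - t ^ y) / (1 - t) ^ ((3:ℝ)/2) := rfl
  have e2 : betaReal x (1/2) = ∫ t in (0:ℝ)..1, t ^ (x-1) * (1-t) ^ ((1:ℝ)/2-1) := rfl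
  have e3 : betaReal (x+y) (1/2) = ∫ t in (0:ℝ)..1, t ^ (x+y-1) * (1-t) ^ ((1:ℝ)/2-1) := rfl
  rw [e1, e2, e3]
  have h0 : (0:ℝ) - 0 = 0 := by norm_num
  rw [h0] at hftc
  linarith [hftc]
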